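/- Let K_1,...,K_j be convex bodies in R^n with j ≤ n, pairwise contained in mutually orthogonal linear subspaces, and with equal Euclidean circumradii R(K_1) = ... = R(K_j). Then R(K_1) + ... + R(K_j) = √j · R(K_1 + ... + K_j). -/

import Mathlib

open Metric Finset

/-- The Euclidean circumradius of a set `K`: the smallest `ρ ≥ 0` such that `K` is
contained in some closed ball of radius `ρ`. -/
noncomputable def circR {n : ℕ} (K : Set (EuclideanSpace ℝ (Fin n))) : ℝ :=
  sInf {ρ : ℝ | 0 ≤ ρ ∧ ∃ x, K ⊆ Metric.closedBall x ρ}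

/-- The Minkowski sum of a finite family of subsets of `ℝⁿ`. -/
def msum {n j : ℕ} (K : Fin j → Set (EuclideanSpace ℝ (Fin n))) :
    Set (EuclideanSpace ℝ (Fin n)) :=
  {x | ∃ f : Fin j → EuclideanSpace ℝ (Fin n), (∀ i, f i ∈ K i) ∧ x = ∑ i, f i}

set_option linter.unusedSectionVars false
variable {E : Type*} [NormedAddCommGroup E] [InnerProductSpace ℝ E]

noncomputable def cheb (K : Set E) (x : E) : ℝ := sSup ((fun k => dist k x) '' K)

lemma exists_farthest {K : Set E} (hK : IsCompact K) (hne : K.Nonempty) (x : E) :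
    ∃ k ∈ K, cheb K x = dist k x ∧ ∀ k' ∈ K, dist k' x ≤ dist k x := by
  obtain ⟨k, hkK, hmax⟩ := hK.exists_isMaxOn hne
    ((continuous_id.dist continuous_const).continuousOn (f := fun k => dist k x))
  refine ⟨k, hkK, ?_, fun k' hk' => hmax hk'⟩
  refine IsGreatest.csSup_eq ⟨⟨k, hkK, rfl⟩, ?_⟩
  rintro ρ ⟨k', hk', rfl⟩; exact hmax hk'

lemma dist_le_cheb {K : Set E} (hK : IsCompact K) (hne : K.Nonempty) {x k : E} (hk : k ∈ K) :
    dist k x ≤ cheb K x := by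
  obtain ⟨k', _, h1, h2⟩ := exists_farthest hK hne x
  exact (h2 k hk).trans h1.ge

lemma cheb_nonneg {K : Set E} (hK : IsCompact K) (hne : K.Nonempty) (x : E) :
    0 ≤ cheb K x :=
  le_trans dist_nonneg (dist_le_cheb hK hne hne.choose_spec)

lemma cheb_le_iff {K : Set E} (hK : IsCompact K) (hne : K.Nonempty) {x : E} {ρ : ℝ} :
    cheb K x ≤ ρ ↔ K ⊆ closedBall x ρ := by
  constructor
  · intro h k hk
    exact mem_closedBall.2 ((dist_le_cheb hK hne hk).trans h)
  · intro h
    obtain ⟨k, hkK, h1, _⟩ := exists_farthest hK hne x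
    exact h1.trans_le (h hkK)

lemma cheb_continuous {K : Set E} (hK : IsCompact K) (hne : K.Nonempty) :
    Continuous (cheb K) := by
  refine LipschitzWith.continuous (K := 1) (LipschitzWith.of_dist_le_mul fun x y => ?_)
  rw [Real.dist_eq, NNReal.coe_one, one_mul]
  have h : ∀ a b : E, cheb K a ≤ cheb K b + dist a b := by
    intro a b
    obtain ⟨k, hkK, h1, _⟩ := exists_farthest hK hne a
    calc cheb K a = dist k a := h1
      _ ≤ dist k b + dist b a := dist_triangle _ _ _
      _ ≤ cheb K b + dist a b := by
          rw [dist_comm b a]; exact add_le_add_left (dist_le_cheb hK hne hkK) _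
  have h1 := h x y; have h2 := h y x
  rw [dist_comm y x] at h2
  rw [abs_le]; constructor <;> linarith

lemma exists_cheb_min [ProperSpace E] {K : Set E} (hK : IsCompact K) (hne : K.Nonempty) :
    ∃ c, ∀ x, cheb K c ≤ cheb K x := by
  obtain ⟨k₀, hk₀⟩ := id hne
  have hball : IsCompact (closedBall k₀ (cheb K k₀)) := isCompact_closedBall _ _
  have hballne : (closedBall k₀ (cheb K k₀)).Nonempty :=
    ⟨k₀, mem_closedBall_self (cheb_nonneg hK hne _)⟩
  obtain ⟨c, hcmem, hcmin⟩ := hball.exists_isMinOn hballne (cheb_continuous hK hne).continuousOn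
  refine ⟨c, fun x => ?_⟩
  by_cases hx : x ∈ closedBall k₀ (cheb K k₀)
  · exact hcmin hx
  · have h1 : cheb K k₀ < dist x k₀ := by simpa [mem_closedBall] using hx
    have h2 : dist k₀ x ≤ cheb K x := dist_le_cheb hK hne hk₀
    have h3 : cheb K c ≤ cheb K k₀ := hcmin (mem_closedBall_self (cheb_nonneg hK hne _))
    rw [dist_comm] at h1; linarith

lemma circR_eq_cheb {n : ℕ} {K : Set (EuclideanSpace ℝ (Fin n))} (hK : IsCompact K)
    (hne : K.Nonempty) {c : EuclideanSpace ℝ (Fin n)} (hc : ∀ x, cheb K c ≤ cheb K x) :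
    circR K = cheb K c := by
  apply le_antisymm
  · exact csInf_le ⟨0, fun ρ hρ => hρ.1⟩
      ⟨cheb_nonneg hK hne _, c, (cheb_le_iff hK hne).1 le_rfl⟩
  · refine le_csInf ⟨cheb K c, cheb_nonneg hK hne _, c, (cheb_le_iff hK hne).1 le_rfl⟩ ?_
    rintro ρ ⟨hρ0, x, hx⟩
    exact (hc x).trans ((cheb_le_iff hK hne).2 hx)

lemma norm_sum_sq_of_orth {m : ℕ} (v : Fin m → E)
    (h : ∀ i i', i ≠ i' → (inner ℝ (v i) (v i') : ℝ) = 0) :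
    ‖∑ i, v i‖ ^ 2 = ∑ i, ‖v i‖ ^ 2 := by
  have key : (inner ℝ (∑ i, v i) (∑ i, v i) : ℝ) = ∑ i, (inner ℝ (v i) (v i) : ℝ) := by
    rw [sum_inner]
    refine Finset.sum_congr rfl fun i _ => ?_
    rw [inner_sum]
    rw [Finset.sum_eq_single i (fun i' _ hi' => h i i' (Ne.symm hi')) (by simp)]
  simpa [real_inner_self_eq_norm_sq] using key

lemma contact {K : Set E} (hK : IsCompact K) (hne : K.Nonempty) {c : E}
    (hmin : ∀ x, cheb K c ≤ cheb K x) (u : E) :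
    ∃ k ∈ K, dist k c = cheb K c ∧ 0 ≤ (inner ℝ u (k - c) : ℝ) := by
  set r := cheb K c with hr
  by_contra hcon
  push_neg at hcon
  have hdich : ∀ k ∈ K, 0 < max (r - dist k c) (-(inner ℝ u (k - c) : ℝ)) := by
    intro k hk
    rcases lt_or_eq_of_le (dist_le_cheb hK hne hk (x := c)) with h | h
    · exact lt_max_of_lt_left (by linarith)
    · exact lt_max_of_lt_right (by have := hcon k hk h; linarith)
  have hcont : Continuous fun k : E => max (r - dist k c) (-(inner ℝ u (k - c) : ℝ)) := by
    apply Continuous.max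
    · exact (continuous_const.sub (continuous_id.dist continuous_const))
    · exact ((continuous_const.inner (continuous_id.sub continuous_const))).neg
  obtain ⟨k₀, hk₀K, hk₀min⟩ := hK.exists_isMinOn hne hcont.continuousOn
  set δ := max (r - dist k₀ c) (-(inner ℝ u (k₀ - c) : ℝ)) with hδdef
  have hδ : 0 < δ := hdich k₀ hk₀K
  set ε := min (δ / (‖u‖ + 1)) (δ / (‖u‖ ^ 2 + 1)) with hε
  have hε0 : 0 < ε := lt_min (div_pos hδ (by positivity)) (div_pos hδ (by positivity))
  have hεu : ε * ‖u‖ < δ := by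
    have h1 : ε ≤ δ / (‖u‖ + 1) := min_le_left _ _
    have h2 : δ / (‖u‖ + 1) * ‖u‖ < δ := by
      rw [div_mul_eq_mul_div, div_lt_iff₀ (by positivity)]
      nlinarith [norm_nonneg u]
    nlinarith [norm_nonneg u]
  have hεu2 : ε * ‖u‖ ^ 2 < 2 * δ := by
    have h1 : ε ≤ δ / (‖u‖ ^ 2 + 1) := min_le_right _ _
    have h2 : δ / (‖u‖ ^ 2 + 1) * ‖u‖ ^ 2 < δ := by
      rw [div_mul_eq_mul_div, div_lt_iff₀ (by positivity)]
      nlinarith [sq_nonneg ‖u‖]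
    nlinarith [sq_nonneg ‖u‖]
  have hkey : ∀ k ∈ K, dist k (c - ε • u) < r := by
    intro k hk
    have hdk : dist k c ≤ r := dist_le_cheb hK hne hk
    have hmk : δ ≤ max (r - dist k c) (-(inner ℝ u (k - c) : ℝ)) := hk₀min hk
    rcases le_max_iff.1 hmk with hcase | hcase
    · have h1 : dist k (c - ε • u) ≤ dist k c + dist c (c - ε • u) := dist_triangle _ _ _
      have h2 : dist c (c - ε • u) = ε * ‖u‖ := by
        rw [dist_self_sub_right, norm_smul, Real.norm_eq_abs, abs_of_pos hε0]
      linarith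
    · have hip : (inner ℝ u (k - c) : ℝ) ≤ -δ := by linarith
      have hexp : dist k (c - ε • u) ^ 2
          = dist k c ^ 2 + 2 * (ε * (inner ℝ u (k - c) : ℝ)) + ε ^ 2 * ‖u‖ ^ 2 := by
        rw [dist_eq_norm, dist_eq_norm, show k - (c - ε • u) = (k - c) + ε • u by abel,
          norm_add_sq_real, real_inner_smul_right, real_inner_comm, norm_smul,
          Real.norm_eq_abs, abs_of_pos hε0, mul_pow]
      have hr0 : 0 ≤ r := le_trans dist_nonneg hdk
      nlinarith [dist_nonneg (x := k) (y := c - ε • u), dist_nonneg (x := k) (y := c)]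
  obtain ⟨k', hk'K, h1, _⟩ := exists_farthest hK hne (c - ε • u)
  have : cheb K (c - ε • u) < r := h1.trans_lt (hkey k' hk'K)
  exact absurd (hmin (c - ε • u)) (by linarith)

lemma dist_orthProj_le {n : ℕ} (V : Submodule ℝ (EuclideanSpace ℝ (Fin n)))
    {k : EuclideanSpace ℝ (Fin n)} (x : EuclideanSpace ℝ (Fin n)) (hk : k ∈ V) :
    dist k (Submodule.orthogonalProjectionOnto V x) ≤ dist k x := by
  have hmem : (x : EuclideanSpace ℝ (Fin n)) - Submodule.orthogonalProjectionOnto V x ∈ Vᗮ :=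
    Submodule.sub_starProjection_mem_orthogonal x
  have hin : (inner ℝ (k - (Submodule.orthogonalProjectionOnto V x : EuclideanSpace ℝ (Fin n)))
      (x - Submodule.orthogonalProjectionOnto V x) : ℝ) = 0 :=
    Submodule.inner_right_of_mem_orthogonal
      (Submodule.sub_mem _ hk (Submodule.orthogonalProjectionOnto V x).2) hmem
  have hdec : k - x = (k - (Submodule.orthogonalProjectionOnto V x : EuclideanSpace ℝ (Fin n)))
      + -(x - Submodule.orthogonalProjectionOnto V x) := by abel
  rw [dist_eq_norm, dist_eq_norm]
  have := norm_add_sq_real (k - (Submodule.orthogonalProjectionOnto V x : EuclideanSpace ℝ (Fin n)))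
    (-(x - (Submodule.orthogonalProjectionOnto V x : EuclideanSpace ℝ (Fin n))))
  rw [inner_neg_right, hin] at this
  nlinarith [norm_nonneg (k - x), norm_nonneg (k - (Submodule.orthogonalProjectionOnto V x : EuclideanSpace ℝ (Fin n))),
    sq_nonneg ‖-(x - (Submodule.orthogonalProjectionOnto V x : EuclideanSpace ℝ (Fin n)))‖, hdec ▸ this]

theorem circumradius_sum_sqrt_equality {n j : ℕ} (hj : j ≤ n)
    (K : Fin j → Set (EuclideanSpace ℝ (Fin n)))
    (hconv : ∀ i, Convex ℝ (K i)) (hcpt : ∀ i, IsCompact (K i))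
    (hne : ∀ i, (K i).Nonempty)
    (horth : ∃ V : Fin j → Submodule ℝ (EuclideanSpace ℝ (Fin n)),
      (∀ i, K i ⊆ (V i : Set (EuclideanSpace ℝ (Fin n)))) ∧
        ∀ k l, k ≠ l → ∀ x ∈ V k, ∀ y ∈ V l, (inner ℝ x y : ℝ) = 0)
    (heq : ∀ k l, circR (K k) = circR (K l)) :
    ∑ i, circR (K i) = Real.sqrt j * circR (msum K) := by
  rcases Nat.eq_zero_or_pos j with hj0 | hj0
  · subst hj0; simp
  obtain ⟨V, hKV, hVo⟩ := horth
  have hmin : ∀ i, ∃ c, c ∈ V i ∧ ∀ x, cheb (K i) c ≤ cheb (K i) x := by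
    intro i
    obtain ⟨c', hc'⟩ := exists_cheb_min (hcpt i) (hne i)
    refine ⟨Submodule.orthogonalProjectionOnto (V i) c', (Submodule.orthogonalProjectionOnto (V i) c').2, fun x => ?_⟩
    refine le_trans ?_ (hc' x)
    obtain ⟨kk, hkK, h1, _⟩ := exists_farthest (hcpt i) (hne i)
      ((Submodule.orthogonalProjectionOnto (V i) c' : EuclideanSpace ℝ (Fin n)))
    rw [h1]
    exact le_trans (dist_orthProj_le _ c' (hKV i hkK)) (dist_le_cheb (hcpt i) (hne i) hkK)
  choose c hcV hcmin using hmin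
  set i0 : Fin j := ⟨0, hj0⟩ with hi0
  set r := circR (K i0) with hrdef
  have hcirc : ∀ i, circR (K i) = cheb (K i) (c i) := fun i =>
    circR_eq_cheb (hcpt i) (hne i) (hcmin i)
  have hchebr : ∀ i, cheb (K i) (c i) = r := fun i => (hcirc i).symm.trans (heq i i0)
  have hr0 : 0 ≤ r := (hchebr i0) ▸ cheb_nonneg (hcpt i0) (hne i0) _
  have hsq : (Real.sqrt j * r) ^ 2 = j * r ^ 2 := by
    rw [mul_pow, Real.sq_sqrt (Nat.cast_nonneg j)]
  have hsr0 : 0 ≤ Real.sqrt j * r := mul_nonneg (Real.sqrt_nonneg _) hr0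
  have hsub : msum K ⊆ closedBall (∑ i, c i) (Real.sqrt j * r) := by
    rintro x ⟨f, hf, rfl⟩
    rw [mem_closedBall, dist_eq_norm, ← Finset.sum_sub_distrib]
    have horthv : ∀ i i', i ≠ i' → (inner ℝ (f i - c i) (f i' - c i') : ℝ) = 0 := fun i i' h =>
      hVo i i' h _ (Submodule.sub_mem _ (hKV i (hf i)) (hcV i)) _
        (Submodule.sub_mem _ (hKV i' (hf i')) (hcV i'))
    have hnorm := norm_sum_sq_of_orth _ horthv
    have hbd : ∀ i, ‖f i - c i‖ ≤ r := fun i => by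
      rw [← dist_eq_norm]
      exact (dist_le_cheb (hcpt i) (hne i) (hf i)).trans_eq (hchebr i)
    have hle : ‖∑ i, (f i - c i)‖ ^ 2 ≤ j * r ^ 2 := by
      rw [hnorm]
      calc ∑ i, ‖f i - c i‖ ^ 2 ≤ ∑ _i : Fin j, r ^ 2 :=
            Finset.sum_le_sum (fun i _ => pow_le_pow_left₀ (norm_nonneg _) (hbd i) 2)
        _ = j * r ^ 2 := by simp [mul_comm]
    nlinarith [norm_nonneg (∑ i, (f i - c i))]
  have hup : circR (msum K) ≤ Real.sqrt j * r :=
    csInf_le ⟨0, fun ρ hρ => hρ.1⟩ ⟨hsr0, ∑ i, c i, hsub⟩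
  have hlow : Real.sqrt j * r ≤ circR (msum K) := by
    refine le_csInf ⟨Real.sqrt j * r, hsr0, ∑ i, c i, hsub⟩ ?_
    rintro ρ ⟨hρ0, x, hx⟩
    have hct : ∀ i, ∃ k ∈ K i, dist k (c i) = r ∧
        0 ≤ (inner ℝ (c i - (Submodule.orthogonalProjectionOnto (V i) x : EuclideanSpace ℝ (Fin n)))
          (k - c i) : ℝ) := by
      intro i
      obtain ⟨k, hk, h1, h2⟩ := contact (hcpt i) (hne i) (hcmin i)
        (c i - (Submodule.orthogonalProjectionOnto (V i) x : EuclideanSpace ℝ (Fin n)))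
      exact ⟨k, hk, h1.trans (hchebr i), h2⟩
    choose k hkK hkdist hkip using hct
    have hmem : (∑ i, k i) ∈ msum K := ⟨k, hkK, rfl⟩
    have hd : dist (∑ i, k i) x ≤ ρ := hx hmem
    set a := ∑ i, (k i - c i) with ha
    set b := (∑ i, c i) - x with hb
    have hab : (∑ i, k i) - x = a + b := by
      rw [ha, hb, Finset.sum_sub_distrib]; abel
    have hkiV : ∀ i, k i - c i ∈ V i := fun i => Submodule.sub_mem _ (hKV i (hkK i)) (hcV i)
    have hna : ‖a‖ ^ 2 = (j : ℝ) * r ^ 2 := by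
      rw [ha, norm_sum_sq_of_orth _ (fun i i' h => hVo i i' h _ (hkiV i) _ (hkiV i'))]
      have : ∀ i, ‖k i - c i‖ ^ 2 = r ^ 2 := fun i => by
        rw [← dist_eq_norm, hkdist i]
      simp [this, mul_comm]
    have hcross : 0 ≤ (inner ℝ a b : ℝ) := by
      rw [ha, sum_inner]
      apply Finset.sum_nonneg
      intro i _
      have hbdec : b = (c i - (Submodule.orthogonalProjectionOnto (V i) x : EuclideanSpace ℝ (Fin n)))
          + ((Submodule.orthogonalProjectionOnto (V i) x : EuclideanSpace ℝ (Fin n)) - x)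
          + ∑ m ∈ Finset.univ.erase i, c m := by
        rw [hb, ← Finset.add_sum_erase _ _ (Finset.mem_univ i)]; abel
      rw [hbdec, inner_add_right, inner_add_right]
      have h1 : 0 ≤ (inner ℝ (k i - c i)
          (c i - (Submodule.orthogonalProjectionOnto (V i) x : EuclideanSpace ℝ (Fin n))) : ℝ) := by
        rw [real_inner_comm]; exact hkip i
      have h2 : (inner ℝ (k i - c i)
          ((Submodule.orthogonalProjectionOnto (V i) x : EuclideanSpace ℝ (Fin n)) - x) : ℝ) = 0 := by
        have hm : (Submodule.orthogonalProjectionOnto (V i) x : EuclideanSpace ℝ (Fin n)) - x ∈ (V i)ᗮ := by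
          rw [show (Submodule.orthogonalProjectionOnto (V i) x : EuclideanSpace ℝ (Fin n)) - x
            = -(x - Submodule.orthogonalProjectionOnto (V i) x) by abel]
          exact Submodule.neg_mem _ (Submodule.sub_starProjection_mem_orthogonal x)
        exact Submodule.inner_right_of_mem_orthogonal (hkiV i) hm
      have h3 : (inner ℝ (k i - c i) (∑ m ∈ Finset.univ.erase i, c m) : ℝ) = 0 := by
        rw [inner_sum]
        apply Finset.sum_eq_zero
        intro m hm
        exact hVo i m (Finset.ne_of_mem_erase hm).symm _ (hkiV i) _ (hcV m)
      linarith
    have hnab : ‖a + b‖ ^ 2 = ‖a‖ ^ 2 + 2 * (inner ℝ a b : ℝ) + ‖b‖ ^ 2 := norm_add_sq_real a b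
    have hdn : dist (∑ i, k i) x = ‖a + b‖ := by rw [dist_eq_norm, hab]
    have hd2 : (j : ℝ) * r ^ 2 ≤ ρ ^ 2 := by
      nlinarith [sq_nonneg ‖b‖, norm_nonneg (a + b), hdn ▸ hd]
    nlinarith
  have hval : circR (msum K) = Real.sqrt j * r := le_antisymm hup hlow
  rw [hval]
  have hLHS : ∑ i, circR (K i) = (j : ℝ) * r := by
    rw [Finset.sum_congr rfl fun i _ => heq i i0]
    simp [mul_comm, hrdef]
  rw [hLHS]
  have hss : Real.sqrt j * Real.sqrt j = (j : ℝ) := Real.mul_self_sqrt (Nat.cast_nonneg j)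
  nlinarith [hss]
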